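/- Let k be a field and let A be a central simple algebra over k with dim_k A = 9 such that A is not isomorphic as a k-algebra to the algebra of 3×3 matrices over k. Then for every field extension K/k with [K:k] = 2, the K-algebra K ⊗_k A is not isomorphic as a K-algebra to the algebra of 3×3 matrices over K. (A nonsplit central simple algebra of degree 3 remains nonsplit over every quadratic extension; equivalently, a Brauer class of order 3 restricts nontrivially to quadratic extensions.) -/

import Mathlib

open TensorProduct

open Module

/-- Every nonzero module over a simple ring receives an injective linear map from
any simple left ideal. -/
lemma aux_exists_inj {A : Type} [Ring A] [IsSimpleRing A]
    (S : Submodule A A) (hS : IsSimpleModule A S)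
    {M : Type} [AddCommGroup M] [Module A M] {m : M} (hm : m ≠ 0) :
    ∃ f : S →ₗ[A] M, Function.Injective f := by
  by_cases H : ∀ b : A, ∀ s : S, (s : A) • (b • m) = 0
  · exfalso
    let T : TwoSidedIdeal A := TwoSidedIdeal.mk' {a : A | ∀ b : A, (a * b) • m = 0}
      (by intro b; simp)
      (fun {x y} hx hy => by intro b; simp only [Set.mem_setOf_eq] at *
                             rw [add_mul, add_smul, hx b, hy b, add_zero])
      (fun {x} hx => by intro b; simp only [Set.mem_setOf_eq] at *
                        rw [neg_mul, neg_smul, hx b, neg_zero])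
      (fun {x y} hy => by intro b; simp only [Set.mem_setOf_eq] at *
                          rw [mul_assoc, mul_smul, hy b, smul_zero])
      (fun {x y} hx => by intro b; simp only [Set.mem_setOf_eq] at *
                          rw [mul_assoc]; exact hx (y * b))
    haveI := hS.nontrivial
    obtain ⟨s, hs⟩ := exists_ne (0 : S)
    have hsA : (s : A) ≠ 0 := fun h => hs (Subtype.ext h)
    have hsT : (s : A) ∈ T := by
      rw [TwoSidedIdeal.mem_mk']
      intro b; rw [mul_smul]; exact H b s
    have h1 : (1 : A) ∈ T := IsSimpleRing.one_mem_of_ne_zero_mem T hsA hsT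
    rw [TwoSidedIdeal.mem_mk'] at h1
    have := h1 1
    rw [one_mul, one_smul] at this
    exact hm this
  · push_neg at H
    obtain ⟨b, s₀, hs₀⟩ := H
    let f : S →ₗ[A] M :=
      { toFun := fun s => (s : A) • (b • m)
        map_add' := fun x y => by simp [add_smul]
        map_smul' := fun a x => by
          simp only [Submodule.coe_smul, smul_eq_mul, mul_smul, RingHom.id_apply] }
    refine ⟨f, LinearMap.injective_of_ne_zero ?_⟩
    intro hf
    exact hs₀ (by have := congrArg (fun g => g s₀) hf; simpa [f] using this)

/-- The `k`-dimension of a simple left ideal of a finite-dimensional simple `k`-algebra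
divides the `k`-dimension of every finite-dimensional module. -/
lemma aux_dvd_finrank (k A : Type) [Field k] [Ring A] [Algebra k A] [IsSimpleRing A]
    [Module.Finite k A]
    (S : Submodule A A) (hS : IsSimpleModule A S) :
    ∀ (n : ℕ) (M : Type) [AddCommGroup M] [Module A M] [Module k M]
      [IsScalarTower k A M] [Module.Finite k M], finrank k M = n →
      finrank k (S.restrictScalars k) ∣ n := by
  intro n
  induction n using Nat.strong_induction_on with
  | _ n ih =>
    intro M _ _ _ _ _ hn
    by_cases hM : Subsingleton M
    · have : finrank k M = 0 := finrank_zero_of_subsingleton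
      simp [← hn, this]
    · rw [not_subsingleton_iff_nontrivial] at hM
      obtain ⟨m, hm⟩ := exists_ne (0 : M)
      obtain ⟨f, hf⟩ := aux_exists_inj S hS hm
      set W : Submodule A M := LinearMap.range f with hW
      have hd : finrank k (W.restrictScalars k) = finrank k (S.restrictScalars k) := by
        have e1 : (S.restrictScalars k) ≃ₗ[k] S :=
          (Submodule.restrictScalarsEquiv k A A S).restrictScalars k
        have e2 : (W.restrictScalars k) ≃ₗ[k] W :=
          (Submodule.restrictScalarsEquiv k A M W).restrictScalars k
        have e3 : S ≃ₗ[A] W := LinearEquiv.ofInjective f hf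
        have e4 : S ≃ₗ[k] W := e3.restrictScalars k
        rw [e2.finrank_eq, e1.finrank_eq, e4.finrank_eq]
      have dpos : 0 < finrank k (S.restrictScalars k) := by
        haveI := hS.nontrivial
        haveI : Nontrivial (S.restrictScalars k) :=
          ((Submodule.restrictScalarsEquiv k A A S).restrictScalars k).toEquiv.nontrivial
        exact finrank_pos
      haveI : Module.Finite k (M ⧸ W) :=
        Module.Finite.of_surjective ((W.mkQ).restrictScalars k) (Submodule.mkQ_surjective W)
      have hq : finrank k (M ⧸ (W.restrictScalars k)) = finrank k (M ⧸ W) :=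
        (Submodule.Quotient.restrictScalarsEquiv k W).finrank_eq
      have hadd : finrank k (M ⧸ (W.restrictScalars k)) + finrank k (W.restrictScalars k)
          = finrank k M := Submodule.finrank_quotient_add_finrank (W.restrictScalars k)
      have hlt : finrank k (M ⧸ W) < n := by omega
      have := ih (finrank k (M ⧸ W)) hlt (M ⧸ W) rfl
      have : finrank k (S.restrictScalars k) ∣ n := by
        have hn' : n = finrank k (M ⧸ W) + finrank k (S.restrictScalars k) := by omega
        rw [hn']
        exact Nat.dvd_add this dvd_rfl
      exact this

/-- A `9`-dimensional simple algebra with a simple left ideal of dimension dividing `3`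
is isomorphic to `M₃(k)`. -/
lemma aux_embed (k A : Type) [Field k] [Ring A] [Algebra k A] [IsSimpleRing A]
    [Module.Finite k A] (hdim : finrank k A = 9)
    (hnonsplit : ¬ Nonempty (A ≃ₐ[k] Matrix (Fin 3) (Fin 3) k))
    (S : Submodule A A) (hS : IsSimpleModule A S)
    (hdvd : finrank k (S.restrictScalars k) ∣ 3) : False := by
  set S' : Submodule k A := S.restrictScalars k with hS'
  haveI : Nontrivial S := hS.nontrivial
  haveI : Nontrivial S' :=
    ((Submodule.restrictScalarsEquiv k A A S).restrictScalars k).toEquiv.nontrivial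
  let ρ : A →ₐ[k] Module.End k S' :=
    { toFun := fun a =>
        { toFun := fun s => ⟨a * (s : A), by
            show a * (s : A) ∈ (S : Set A)
            have : (s : A) ∈ S := s.2
            simpa [smul_eq_mul] using S.smul_mem a this⟩
          map_add' := fun x y => by ext; simp [mul_add]
          map_smul' := fun c x => by ext; simp [mul_smul_comm] }
      map_one' := by ext s; simp
      map_mul' := fun a b => by ext s; simp [mul_assoc]
      map_zero' := by ext s; simp
      map_add' := fun a b => by ext s; simp [add_mul]
      commutes' := fun c => by
        ext s
        simp [Module.algebraMap_end_apply, Algebra.smul_def] }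
  haveI : Nontrivial (Module.End k S') := by
    obtain ⟨s, hs⟩ := exists_ne (0 : S')
    exact ⟨1, 0, fun h => hs (by simpa using congrArg (fun g : Module.End k S' => g s) h)⟩
  have hinj : Function.Injective ρ := (ρ.toRingHom : A →+* Module.End k S').injective
  have h1 : finrank k (Module.End k S') = finrank k S' * finrank k S' :=
    Module.finrank_linearMap k k ↥S' ↥S'
  have h2 : finrank k A ≤ finrank k (Module.End k S') :=
    LinearMap.finrank_le_finrank_of_injective (f := ρ.toLinearMap) hinj
  have hd13 : finrank k S' = 1 ∨ finrank k S' = 3 :=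
    (Nat.prime_three.eq_one_or_self_of_dvd _ hdvd)
  rcases hd13 with hd | hd
  · rw [hd] at h1; omega
  · have hbij : Function.Bijective ρ := by
      refine ⟨hinj, ?_⟩
      have heq : finrank k A = finrank k (Module.End k S') := by rw [h1, hd, hdim]
      let e0 := LinearMap.linearEquivOfInjective (V₂ := Module.End k S') ρ.toLinearMap hinj heq
      intro y
      exact ⟨e0.symm y, by
        have := LinearMap.linearEquivOfInjective_apply (V₂ := Module.End k S') (f := ρ.toLinearMap) hinj heq (e0.symm y)
        rw [show e0 (e0.symm y) = y from e0.apply_symm_apply y] at this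
        exact this.symm⟩
    exact hnonsplit ⟨(AlgEquiv.ofBijective ρ hbij).trans
      (algEquivMatrix (Module.finBasisOfFinrankEq k S' hd))⟩

/-- A central simple algebra of dimension `9` (degree `3`) over `k` that is not split
remains nonsplit over every quadratic extension `K/k`. -/
theorem csa_degree_three_nonsplit_over_quadratic_extension
    (k : Type) [Field k]
    (A : Type) [Ring A] [Algebra k A]
    [Algebra.IsCentral k A] [IsSimpleRing A]
    (hdim : Module.finrank k A = 9)
    (hnonsplit : ¬ Nonempty (A ≃ₐ[k] Matrix (Fin 3) (Fin 3) k)) :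
    ∀ (K : Type) [Field K] [Algebra k K], Module.finrank k K = 2 →
      ¬ Nonempty ((K ⊗[k] A) ≃ₐ[K] Matrix (Fin 3) (Fin 3) K) := by
  intro K _ _ hK hne
  obtain ⟨e⟩ := hne
  haveI : FiniteDimensional k A := FiniteDimensional.of_finrank_pos (by rw [hdim]; norm_num)
  haveI : FiniteDimensional k K := FiniteDimensional.of_finrank_pos (by rw [hK]; norm_num)
  -- a simple left ideal of A
  haveI : IsArtinian A A := isArtinian_of_tower k inferInstance
  haveI : IsAtomic (Submodule A A) := isAtomic_of_orderBot_wellFounded_lt wellFounded_lt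
  obtain hbot | ⟨S, hSatom, -⟩ := eq_bot_or_exists_atom_le (⊤ : Submodule A A)
  · have : (1 : A) ∈ (⊥ : Submodule A A) := hbot ▸ Submodule.mem_top
    simp only [Submodule.mem_bot] at this
    exact one_ne_zero this
  have hS : IsSimpleModule A S := isSimpleModule_iff_isAtom.mpr hSatom
  -- the dimension of S divides 9
  have hd9 : finrank k (S.restrictScalars k) ∣ 9 :=
    aux_dvd_finrank k A S hS 9 A hdim
  -- the module V = K³, on which A acts through K ⊗ A ≃ M₃(K)
  let f : A →ₐ[k] Matrix (Fin 3) (Fin 3) K :=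
    ((e.restrictScalars k).toAlgHom).comp (Algebra.TensorProduct.includeRight)
  let ml : Matrix (Fin 3) (Fin 3) K ≃ₐ[K] Module.End K (Fin 3 → K) := Matrix.toLinAlgEquiv'
  let φ : A →+* Module.End K (Fin 3 → K) := ml.toAlgHom.toRingHom.comp f.toRingHom
  letI : Module A (Fin 3 → K) := Module.compHom _ φ
  haveI : IsScalarTower k A (Fin 3 → K) := by
    constructor
    intro c a v
    show φ (c • a) v = c • (φ a v)
    rw [Algebra.smul_def, map_mul, Module.End.mul_apply]
    generalize φ a v = w
    show ml (f (algebraMap k A c)) w = c • w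
    rw [AlgHom.commutes, IsScalarTower.algebraMap_apply k K (Matrix (Fin 3) (Fin 3) K),
      AlgEquiv.commutes, Module.algebraMap_end_apply, algebraMap_smul]
  have h6 : finrank k (Fin 3 → K) = 6 := by
    rw [finrank_pi_fintype]
    simp [hK]
  -- the dimension of S divides 6
  have hd6 : finrank k (S.restrictScalars k) ∣ 6 :=
    aux_dvd_finrank k A S hS 6 (Fin 3 → K) h6
  have hd3 : finrank k (S.restrictScalars k) ∣ 3 := by
    have := Nat.dvd_gcd hd9 hd6
    simpa using this
  exact aux_embed k A hdim hnonsplit S hS hd3
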